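/- Let G be a nonabelian finite 2-group with |G : G'| = 4, where G' is the derived subgroup. Then the number of conjugacy classes k(G) is not a power of 2. -/

import Mathlib

open Subgroup
open scoped commutatorElement

variable {G : Type} [Group G]

private lemma aux_normal_of_index_two (A : Subgroup G) (h : A.index = 2) : A.Normal := by
  constructor
  intro x hx g
  by_cases hg : g ∈ A
  · exact A.mul_mem (A.mul_mem hg hx) (A.inv_mem hg)
  · have hg' : g⁻¹ ∉ A := fun hh => hg (by simpa using A.inv_mem hh)
    have hgx : g * x ∉ A := by
      intro hgx
      exact hg (by simpa [mul_assoc] using A.mul_mem hgx (A.inv_mem hx))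
    rw [Subgroup.mul_mem_iff_of_index_two h]
    simp [hgx, hg']

private lemma aux_mul_mem_of_not_mem (A : Subgroup G) (h : A.index = 2) {x y : G}
    (hx : x ∉ A) (hy : y ∉ A) : x * y ∈ A := by
  rw [Subgroup.mul_mem_iff_of_index_two h]; simp [hx, hy]

/-- Core construction: homomorphism `x ↦ ⁅x, b⁆` on an abelian index-2 subgroup,
whose range is the whole commutator subgroup. -/
private lemma aux_core (A : Subgroup G) (hA2 : A.index = 2)
    (hcomm : ∀ x y : G, x ∈ A → y ∈ A → x * y = y * x)
    {b : G} (hb : b ∉ A) :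
    ∃ ψ : A →* G, (∀ x : A, ψ x = ⁅(x : G), b⁆) ∧ (∀ x : A, ψ x ∈ A) ∧
      ψ.range = commutator G := by
  haveI := aux_normal_of_index_two A hA2
  have hmemA : ∀ x : G, x ∈ A → ⁅x, b⁆ ∈ A := by
    intro x hx
    have h1 : b * x⁻¹ * b⁻¹ ∈ A := Subgroup.Normal.conj_mem ‹A.Normal› _ (A.inv_mem hx) b
    have h2 : ⁅x, b⁆ = x * (b * x⁻¹ * b⁻¹) := by
      simp only [commutatorElement_def]; group
    rw [h2]; exact A.mul_mem hx h1
  have conjA : ∀ u v : G, u ∈ A → v ∈ A → u * v * u⁻¹ = v := by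
    intro u v hu hv; rw [hcomm u v hu hv]; group
  have hmul : ∀ x y : A, ⁅((x * y : A) : G), b⁆ = ⁅(x : G), b⁆ * ⁅(y : G), b⁆ := by
    intro x y
    have hyb : ⁅(y : G), b⁆ ∈ A := hmemA _ y.2
    have h1 : (x : G) * ⁅(y : G), b⁆ * (x : G)⁻¹ = ⁅(y : G), b⁆ := conjA _ _ x.2 hyb
    have h2 : ((x * y : A) : G) = (x : G) * (y : G) := rfl
    calc ⁅((x * y : A) : G), b⁆ = (x : G) * ⁅(y : G), b⁆ * (x : G)⁻¹ * ⁅(x : G), b⁆ := by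
            rw [h2]; simp only [commutatorElement_def]; group
      _ = ⁅(y : G), b⁆ * ⁅(x : G), b⁆ := by rw [h1]
      _ = ⁅(x : G), b⁆ * ⁅(y : G), b⁆ := hcomm _ _ hyb (hmemA _ x.2)
  set ψ : A →* G := { toFun := fun x => ⁅(x : G), b⁆
                      map_one' := by simp only [coe_one, commutatorElement_def]; group
                      map_mul' := hmul } with hψdef
  have hψ : ∀ x : A, ψ x = ⁅(x : G), b⁆ := fun x => rfl
  refine ⟨ψ, hψ, fun x => hmemA _ x.2, ?_⟩
  -- decomposition of arbitrary elements
  have hdec : ∀ g : G, g ∈ A ∨ ∃ x, x ∈ A ∧ g = x * b := by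
    intro g
    by_cases hg : g ∈ A
    · exact Or.inl hg
    · refine Or.inr ⟨g * b⁻¹, aux_mul_mem_of_not_mem A hA2 hg
        (fun h => hb (by simpa using A.inv_mem h)), by group⟩
  have c2 : ∀ x y : G, x ∈ A → y ∈ A → ⁅x, y * b⁆ ∈ ψ.range := by
    intro x y hx hy
    have e0 : ⁅x, y⁆ = 1 := commutatorElement_eq_one_iff_commute.mpr (hcomm x y hx hy)
    have key : ⁅x, y * b⁆ = ⁅x, b⁆ := by
      calc ⁅x, y * b⁆ = ⁅x, y⁆ * (y * ⁅x, b⁆ * y⁻¹) := by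
              simp only [commutatorElement_def]; group
        _ = y * ⁅x, b⁆ * y⁻¹ := by rw [e0, one_mul]
        _ = ⁅x, b⁆ := conjA _ _ hy (hmemA _ hx)
    rw [key]
    exact ⟨⟨x, hx⟩, rfl⟩
  have c3 : ∀ x y : G, x ∈ A → y ∈ A → ⁅x * b, y⁆ ∈ ψ.range := by
    intro x y hx hy
    have : ⁅x * b, y⁆ = ⁅y, x * b⁆⁻¹ := by rw [commutatorElement_inv]
    rw [this]
    exact ψ.range.inv_mem (c2 y x hy hx)
  have c4 : ∀ x y : G, x ∈ A → y ∈ A → ⁅x * b, y * b⁆ ∈ ψ.range := by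
    intro x y hx hy
    have key : ⁅x * b, y * b⁆ = ⁅x * b, y⁆ * (y * ⁅x, b⁆ * y⁻¹) := by
      simp only [commutatorElement_def]; group
    rw [key, conjA _ _ hy (hmemA _ hx)]
    exact ψ.range.mul_mem (c3 x y hx hy) ⟨⟨x, hx⟩, rfl⟩
  have hC : ∀ g₁ g₂ : G, ⁅g₁, g₂⁆ ∈ ψ.range := by
    intro g₁ g₂
    rcases hdec g₁ with h1 | ⟨x, hx, rfl⟩ <;> rcases hdec g₂ with h2 | ⟨y, hy, rfl⟩
    · rw [commutatorElement_eq_one_iff_commute.mpr (hcomm _ _ h1 h2)]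
      exact ψ.range.one_mem
    · exact c2 _ _ h1 hy
    · exact c3 _ _ hx h2
    · exact c4 _ _ hx hy
  apply le_antisymm
  · rintro _ ⟨x, rfl⟩
    exact commutator_mem_commutator (mem_top _) (mem_top _)
  · rw [commutator_def]
    exact Subgroup.commutator_le.mpr fun g₁ _ g₂ _ => hC g₁ g₂

private lemma aux_ker_card [Finite G] (A : Subgroup G) (hA2 : A.index = 2)
    (hcomm : ∀ x y : G, x ∈ A → y ∈ A → x * y = y * x)
    (hidx : (commutator G).index = 4) {g : G} (hg : g ∉ A) :
    Nat.card {x : A // (x : G) * g = g * (x : G)} = 2 := by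
  obtain ⟨ψ, hψ, hmem, hrange⟩ := aux_core A hA2 hcomm hg
  have e1 : Nat.card ψ.ker * Nat.card ψ.range = Nat.card A := by
    have := Subgroup.card_mul_index ψ.ker
    rwa [Subgroup.index_ker] at this
  have e2 : Nat.card ψ.range * 4 = Nat.card G := by
    rw [hrange, ← hidx]; exact Subgroup.card_mul_index _
  have e3 : Nat.card A * 2 = Nat.card G := by
    rw [← hA2]; exact Subgroup.card_mul_index _
  have hr : Nat.card ψ.range ≠ 0 := Nat.card_pos.ne'
  have hker : Nat.card ψ.ker = 2 := by
    have : Nat.card ψ.ker * Nat.card ψ.range * 2 = Nat.card ψ.range * 4 := by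
      rw [e1, e3, e2]
    have h2 : Nat.card ψ.ker * 2 * Nat.card ψ.range = 4 * Nat.card ψ.range := by ring_nf; ring_nf at this; omega
    have := Nat.eq_of_mul_eq_mul_right (Nat.pos_of_ne_zero hr) h2
    omega
  rw [← hker]
  apply Nat.card_congr
  refine Equiv.subtypeEquivRight fun x => ?_
  rw [MonoidHom.mem_ker, hψ, commutatorElement_eq_one_iff_commute]
  exact Iff.rfl

private lemma aux_count [Finite G] (A : Subgroup G) (hA2 : A.index = 2)
    (hcomm : ∀ x y : G, x ∈ A → y ∈ A → x * y = y * x)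
    (hna : ¬ ∀ x y : G, x * y = y * x)
    (hidx : (commutator G).index = 4) :
    2 * Nat.card (ConjClasses G) = Nat.card A + 6 := by
  classical
  haveI := aux_normal_of_index_two A hA2
  -- an element outside A
  have hAne : A ≠ ⊤ := by
    intro h; rw [h, Subgroup.index_top] at hA2; omega
  obtain ⟨b, hb⟩ : ∃ b : G, b ∉ A := by
    by_contra h; push_neg at h
    exact hAne ((Subgroup.eq_top_iff' A).mpr h)
  -- decomposition relative to any u ∉ A
  have hdec : ∀ u : G, u ∉ A → ∀ g : G, ∃ g₀ ∈ A, g = g₀ ∨ g = g₀ * u := by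
    intro u hu g
    by_cases hg : g ∈ A
    · exact ⟨g, hg, Or.inl rfl⟩
    · refine ⟨g * u⁻¹, aux_mul_mem_of_not_mem A hA2 hg
        (fun h => hu (by simpa using A.inv_mem h)), Or.inr (by group)⟩
  -- the center is contained in A
  have hZle : ∀ w : G, w ∈ Subgroup.center G → w ∈ A := by
    intro w hwZ
    by_contra hw
    apply hna
    intro x y
    have cw : ∀ g : G, Commute g w := fun g => Subgroup.mem_center_iff.mp hwZ g
    obtain ⟨x₀, hx₀, hx⟩ := hdec w hw x
    obtain ⟨y₀, hy₀, hy⟩ := hdec w hw y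
    have c0 : Commute x₀ y₀ := hcomm _ _ hx₀ hy₀
    have cxy0 : Commute x y₀ := by
      rcases hx with rfl | rfl
      · exact c0
      · exact (c0.mul_left (cw y₀).symm)
    have cxy : Commute x y := by
      rcases hy with rfl | rfl
      · exact cxy0
      · exact cxy0.mul_right (cw x)
    exact cxy
  -- characterization of the center inside A
  have hcen_iff : ∀ u : G, u ∉ A → ∀ x : G, x ∈ A → (x ∈ Subgroup.center G ↔ x * u = u * x) := by
    intro u hu x hxA
    constructor
    · intro hx; exact (Subgroup.mem_center_iff.mp hx u).symm
    · intro hcb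
      rw [Subgroup.mem_center_iff]
      intro g
      obtain ⟨g₀, hg₀, hg⟩ := hdec u hu g
      have c1 : Commute x g₀ := hcomm _ _ hxA hg₀
      have c2 : Commute x u := hcb
      rcases hg with rfl | rfl
      · exact c1.symm
      · exact (c1.mul_right c2).symm
  -- center has exactly 2 elements
  have hZcard : Nat.card (Subgroup.center G) = 2 := by
    rw [← aux_ker_card A hA2 hcomm hidx hb]
    apply Nat.card_congr
    refine ⟨fun w => ⟨⟨w.1, hZle _ w.2⟩, (hcen_iff b hb _ (hZle _ w.2)).mp w.2⟩,
            fun x => ⟨x.1.1, (hcen_iff b hb _ x.1.2).mpr x.2⟩, fun _ => rfl, fun _ => rfl⟩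
  -- per-element centralizer sizes
  have hv1 : ∀ g : G, g ∈ Subgroup.center G → Nat.card {h : G // Commute g h} = Nat.card G := by
    intro g hg
    exact Nat.card_congr (Equiv.subtypeUnivEquiv fun h => (Subgroup.mem_center_iff.mp hg h).symm)
  have hcomm_card : ∀ g : G,
      Nat.card {h : G // Commute g h} = Nat.card (Subgroup.centralizer {g}) := by
    intro g
    apply Nat.card_congr
    refine Equiv.subtypeEquivRight fun h => ?_
    rw [Subgroup.mem_centralizer_iff]
    constructor
    · intro hc y hy; rw [Set.mem_singleton_iff] at hy; subst hy; exact hc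
    · intro hc; exact hc g rfl
  have hv2 : ∀ g : G, g ∈ A → g ∉ Subgroup.center G →
      Nat.card {h : G // Commute g h} = Nat.card A := by
    intro g hgA hgZ
    rw [hcomm_card g]
    set C := Subgroup.centralizer {g} with hC
    have hAC : A ≤ C := by
      intro x hx
      rw [Subgroup.mem_centralizer_iff]
      intro y hy; rw [Set.mem_singleton_iff] at hy; subst hy
      exact hcomm _ _ hgA hx
    have hCtop : C ≠ ⊤ := by
      intro h
      apply hgZ
      rw [Subgroup.mem_center_iff]
      intro h'
      have : h' ∈ C := h ▸ Subgroup.mem_top h'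
      rw [Subgroup.mem_centralizer_iff] at this
      exact (this g rfl).symm
    have hdvd : C.index ∣ 2 := hA2 ▸ Subgroup.index_dvd_of_le hAC
    have hne1 : C.index ≠ 1 := fun h => hCtop (Subgroup.index_eq_one.mp h)
    have hCidx : C.index = 2 := ((Nat.dvd_prime Nat.prime_two).mp hdvd).resolve_left hne1
    have e1 : Nat.card C * 2 = Nat.card G := by rw [← hCidx]; exact Subgroup.card_mul_index _
    have e2 : Nat.card A * 2 = Nat.card G := by rw [← hA2]; exact Subgroup.card_mul_index _
    omega
  have hv3 : ∀ g : G, g ∉ A → Nat.card {h : G // Commute g h} = 4 := by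
    intro g hg
    rw [hcomm_card g]
    set C := Subgroup.centralizer {g} with hC
    have hgC : g ∈ C := by
      rw [Subgroup.mem_centralizer_iff]
      intro y hy; rw [Set.mem_singleton_iff] at hy; subst hy; rfl
    set χ : C →* G ⧸ A := (QuotientGroup.mk' A).comp C.subtype with hχ
    have hCcard : Nat.card χ.ker * Nat.card χ.range = Nat.card C := by
      have := Subgroup.card_mul_index χ.ker
      rwa [Subgroup.index_ker] at this
    have hkermem : ∀ x : C, x ∈ χ.ker ↔ (x : G) ∈ A := by
      intro x
      rw [MonoidHom.mem_ker, hχ, MonoidHom.comp_apply]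
      show QuotientGroup.mk' A (x : G) = 1 ↔ _
      rw [← MonoidHom.mem_ker, QuotientGroup.ker_mk']
    have hCmem : ∀ x : G, x ∈ C ↔ g * x = x * g := by
      intro x
      rw [Subgroup.mem_centralizer_iff]
      constructor
      · intro hc; exact hc g rfl
      · intro hc y hy; rw [Set.mem_singleton_iff] at hy; subst hy; exact hc
    have hker2 : Nat.card χ.ker = 2 := by
      rw [← aux_ker_card A hA2 hcomm hidx hg]
      apply Nat.card_congr
      refine ⟨fun x => ⟨⟨x.1.1, (hkermem x.1).mp x.2⟩, ((hCmem x.1.1).mp x.1.2).symm⟩,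
              fun v => ⟨⟨v.1.1, (hCmem v.1.1).mpr v.2.symm⟩, (hkermem _).mpr v.1.2⟩,
              fun _ => rfl, fun _ => rfl⟩
    have hrange2 : Nat.card χ.range = 2 := by
      have hdvd : Nat.card χ.range ∣ Nat.card (G ⧸ A) := Subgroup.card_subgroup_dvd_card _
      have hGA : Nat.card (G ⧸ A) = 2 := hA2
      rw [hGA] at hdvd
      have hne1 : Nat.card χ.range ≠ 1 := by
        intro h1
        have hbot := Subgroup.card_eq_one.mp h1
        have : χ ⟨g, hgC⟩ ∈ χ.range := ⟨_, rfl⟩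
        rw [hbot, Subgroup.mem_bot] at this
        have : (g : G ⧸ A) = 1 := this
        rw [QuotientGroup.eq_one_iff] at this
        exact hg this
      exact ((Nat.dvd_prime Nat.prime_two).mp hdvd).resolve_left hne1
    rw [← hCcard, hker2, hrange2]
  -- Burnside style count
  haveI : Fintype G := Fintype.ofFinite G
  have hpairs := card_comm_eq_card_conjClasses_mul_card G
  have hsig : Nat.card {p : G × G // Commute p.1 p.2}
      = ∑ g : G, Nat.card {h : G // Commute g h} := by
    rw [Nat.card_congr (Equiv.subtypeProdEquivSigmaSubtype (fun g h : G => Commute g h))]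
    rw [Nat.card_eq_fintype_card, Fintype.card_sigma]
    exact Finset.sum_congr rfl fun g _ => (Nat.card_eq_fintype_card).symm
  set q := Nat.card A with hq
  set N := Nat.card G with hN
  set f : G → ℕ := fun g => Nat.card {h : G // Commute g h} with hf
  have split1 := Finset.sum_filter_add_sum_filter_not Finset.univ (fun g => g ∈ A) f
  have split2 := Finset.sum_filter_add_sum_filter_not (Finset.univ.filter (fun g => g ∈ A))
      (fun g => g ∈ Subgroup.center G) f
  -- cardinalities of the filters
  have hcardA : (Finset.univ.filter (fun g => g ∈ A)).card = q := by
    rw [hq, Nat.card_eq_fintype_card, Fintype.card_subtype]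
  have hcardZfil : ((Finset.univ.filter (fun g => g ∈ A)).filter
      (fun g => g ∈ Subgroup.center G)).card = 2 := by
    have : ((Finset.univ.filter (fun g => g ∈ A)).filter (fun g => g ∈ Subgroup.center G))
        = Finset.univ.filter (fun g => g ∈ Subgroup.center G) := by
      ext g
      simp only [Finset.mem_filter, Finset.mem_univ, true_and]
      exact ⟨fun h => h.2, fun h => ⟨hZle g h, h⟩⟩
    rw [this, ← Fintype.card_subtype, ← Nat.card_eq_fintype_card]
    exact hZcard
  have hcardnA : (Finset.univ.filter (fun g => ¬ g ∈ A)).card = N - q := by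
    have := Finset.card_filter_add_card_filter_not (s := Finset.univ)
      (p := fun g : G => g ∈ A)
    rw [hcardA, Finset.card_univ, ← Nat.card_eq_fintype_card, ← hN] at this
    omega
  have hsumZ : ∑ g ∈ (Finset.univ.filter (fun g => g ∈ A)).filter
      (fun g => g ∈ Subgroup.center G), f g = 2 * N := by
    have hval : ∀ g ∈ (Finset.univ.filter (fun g => g ∈ A)).filter
        (fun g => g ∈ Subgroup.center G), f g = N := by
      intro g hgm
      simp only [Finset.mem_filter] at hgm
      exact hv1 g hgm.2
    rw [Finset.sum_congr rfl hval, Finset.sum_const, hcardZfil, smul_eq_mul]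
  have hsumAnZ : ∑ g ∈ (Finset.univ.filter (fun g => g ∈ A)).filter
      (fun g => ¬ g ∈ Subgroup.center G), f g = (q - 2) * q := by
    have hval : ∀ g ∈ (Finset.univ.filter (fun g => g ∈ A)).filter
        (fun g => ¬ g ∈ Subgroup.center G), f g = q := by
      intro g hgm
      simp only [Finset.mem_filter, Finset.mem_univ, true_and] at hgm
      exact hv2 g hgm.1 hgm.2
    rw [Finset.sum_congr rfl hval, Finset.sum_const, smul_eq_mul]
    congr 1
    have := Finset.card_filter_add_card_filter_not
      (s := Finset.univ.filter (fun g => g ∈ A))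
      (p := fun g : G => g ∈ Subgroup.center G)
    rw [hcardZfil, hcardA] at this
    omega
  have hsumnA : ∑ g ∈ Finset.univ.filter (fun g => ¬ g ∈ A), f g = (N - q) * 4 := by
    have hval : ∀ g ∈ Finset.univ.filter (fun g => ¬ g ∈ A), f g = 4 := by
      intro g hgm
      simp only [Finset.mem_filter, Finset.mem_univ, true_and] at hgm
      exact hv3 g hgm
    rw [Finset.sum_congr rfl hval, Finset.sum_const, hcardnA, smul_eq_mul]
  -- assemble
  have htotal : Nat.card (ConjClasses G) * N = 2 * N + (q - 2) * q + (N - q) * 4 := by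
    rw [← hpairs, hsig, ← split1, ← split2, hsumZ, hsumAnZ, hsumnA]
  -- arithmetic
  have e2 : q * 2 = N := by rw [hq, hN, ← hA2]; exact Subgroup.card_mul_index _
  have hq2 : 2 ≤ q := by
    have := Subgroup.card_dvd_of_le (fun w hw => hZle w hw)
    rw [hZcard, ← hq] at this
    exact Nat.le_of_dvd Nat.card_pos this
  have hsub : (q - 2) * q = q * q - 2 * q := by rw [Nat.sub_mul]
  have hqq : 2 * q ≤ q * q := Nat.mul_le_mul_right q hq2
  set k := Nat.card (ConjClasses G) with hk
  have key : (2 * k) * q = (q + 6) * q := by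
    have l1 : (2 * k) * q = k * N := by rw [← e2]; ring
    rw [l1, htotal, hsub]
    have hN2 : N = q * 2 := e2.symm
    rw [hN2, show (q + 6) * q = q * q + 6 * q from by ring,
      show q * 2 - q = q from by omega]
    generalize q * q = r at hqq ⊢
    omega
  have := Nat.eq_of_mul_eq_mul_right (by omega : 0 < q) key
  omega

private lemma aux_central_involution [Finite G] (hG : IsPGroup 2 G)
    (hna : ¬ ∀ x y : G, x * y = y * x) :
    ∃ z : G, orderOf z = 2 ∧ z ∈ Subgroup.center G ∧ z ∈ commutator G := by
  haveI : Fact (Nat.Prime 2) := ⟨Nat.prime_two⟩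
  -- commutator is nontrivial
  obtain ⟨x, y, hxy⟩ : ∃ x y : G, x * y ≠ y * x := by
    by_contra h; push_neg at h; exact hna h
  have hcne : ⁅x, y⁆ ≠ 1 := fun h => hxy (commutatorElement_eq_one_iff_commute.mp h)
  have hcmem : ⁅x, y⁆ ∈ commutator G :=
    commutator_mem_commutator (mem_top _) (mem_top _)
  haveI : Nontrivial (commutator G) :=
    ⟨⟨⟨⁅x, y⁆, hcmem⟩, 1, fun h => hcne (by simpa using congrArg Subtype.val h)⟩⟩
  have hdvd : 2 ∣ Nat.card (commutator G) := by
    obtain ⟨n, hn0, hn⟩ := (hG.to_subgroup (commutator G)).nontrivial_iff_card.mp inferInstance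
    exact hn ▸ dvd_pow_self 2 (Nat.pos_iff_ne_zero.mp hn0)
  -- conjugation action of G on the commutator subgroup; find a nontrivial fixed point
  have h1fix : (1 : commutator G) ∈ MulAction.fixedPoints (ConjAct G) (commutator G) := by
    intro g
    apply Subtype.ext
    rw [ConjAct.Subgroup.val_conj_smul]
    simp
  obtain ⟨b, hbfix, hb1⟩ := IsPGroup.exists_fixed_point_of_prime_dvd_card_of_fixed_point
    (hG.of_equiv ConjAct.toConjAct) (commutator G) hdvd h1fix
  have hbcen : (b : G) ∈ Subgroup.center G := by
    rw [Subgroup.mem_center_iff]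
    intro g
    have := hbfix (ConjAct.toConjAct g)
    have hval : g * (b : G) * g⁻¹ = (b : G) := by
      have := congrArg Subtype.val this
      rwa [ConjAct.Subgroup.val_conj_smul, ConjAct.smul_def, ConjAct.ofConjAct_toConjAct] at this
    calc g * (b : G) = (g * (b : G) * g⁻¹) * g := by group
      _ = (b : G) * g := by rw [hval]
  have hbne : (b : G) ≠ 1 := by
    intro h
    have hb' : b = 1 := Subtype.ext (by rw [h]; rfl)
    exact hb1 hb'.symm
  -- extract an element of order 2
  obtain ⟨k, hk⟩ := hG (b : G)
  obtain ⟨k', hk'le, hk'⟩ := (Nat.dvd_prime_pow Nat.prime_two).mp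
    (orderOf_dvd_of_pow_eq_one hk)
  have hk'1 : 1 ≤ k' := by
    rcases Nat.eq_zero_or_pos k' with h0 | h; swap; · exact h
    rw [h0, pow_zero] at hk'
    exact absurd (orderOf_eq_one_iff.mp hk') hbne
  refine ⟨(b : G) ^ (2 ^ (k' - 1)), ?_, Subgroup.pow_mem _ hbcen _, Subgroup.pow_mem _ b.2 _⟩
  apply orderOf_eq_prime
  · rw [← pow_mul]
    have : 2 ^ (k' - 1) * 2 = 2 ^ k' := by
      rw [← pow_succ]
      congr 1
      omega
    rw [this, ← hk']
    exact pow_orderOf_eq_one _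
  · intro h
    have := orderOf_dvd_of_pow_eq_one h
    rw [hk'] at this
    have hle := Nat.le_of_dvd (by positivity) this
    have : (2 : ℕ) ^ (k' - 1) < 2 ^ k' := by
      apply Nat.pow_lt_pow_right (by norm_num)
      omega
    omega

private lemma aux_cyclic_index_two :
    ∀ (N : ℕ) (G : Type) [Group G] [Finite G], Nat.card G = N →
      IsPGroup 2 G → (¬ ∀ x y : G, x * y = y * x) → (commutator G).index = 4 →
      ∃ a : G, (Subgroup.zpowers a).index = 2 := by
  intro N
  induction N using Nat.strong_induction_on with
  | _ N IH =>
  intro G _ _ hcard hG hna hidx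
  haveI : Fact (Nat.Prime 2) := ⟨Nat.prime_two⟩
  obtain ⟨z, hz2, hzc, hzcomm⟩ := aux_central_involution hG hna
  have hzne1 : z ≠ 1 := by
    intro h; rw [h, orderOf_one] at hz2; omega
  have h2comm : 2 ∣ Nat.card (commutator G) := hz2 ▸ Subgroup.orderOf_dvd_natCard _ hzcomm
  have ecomm : Nat.card (commutator G) * 4 = Nat.card G := by
    rw [← hidx]; exact Subgroup.card_mul_index _
  have hGge8 : 8 ≤ Nat.card G := by
    have := Nat.le_of_dvd Nat.card_pos h2comm
    omega
  by_cases h8 : Nat.card G = 8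
  · -- base case : |G| = 8
    obtain ⟨g, hg⟩ : ∃ g : G, g * g ≠ 1 := by
      by_contra h; push_neg at h
      apply hna; intro x y
      have hinv : ∀ w : G, w⁻¹ = w := fun w => inv_eq_of_mul_eq_one_right (h w)
      calc x * y = (x * y)⁻¹ := (hinv _).symm
        _ = y⁻¹ * x⁻¹ := mul_inv_rev x y
        _ = y * x := by rw [hinv, hinv]
    obtain ⟨k, hk⟩ := hG g
    obtain ⟨s, _, hs⟩ := (Nat.dvd_prime_pow Nat.prime_two).mp (orderOf_dvd_of_pow_eq_one hk)
    have hdvd8 : orderOf g ∣ 8 := h8 ▸ orderOf_dvd_natCard g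
    have hne1 : orderOf g ≠ 1 := by
      intro h; rw [orderOf_eq_one_iff.mp h] at hg; simp at hg
    have hne2 : orderOf g ≠ 2 := by
      intro h
      have := pow_orderOf_eq_one g
      rw [h, sq] at this
      exact hg this
    have hne8 : orderOf g ≠ 8 := by
      intro h
      have htop : Subgroup.zpowers g = ⊤ := by
        apply Subgroup.eq_top_of_card_eq
        rw [Nat.card_zpowers, h, h8]
      apply hna
      intro x y
      have hx : x ∈ Subgroup.zpowers g := htop ▸ Subgroup.mem_top x
      have hy : y ∈ Subgroup.zpowers g := htop ▸ Subgroup.mem_top y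
      obtain ⟨i, rfl⟩ := hx
      obtain ⟨j, rfl⟩ := hy
      rw [← zpow_add, ← zpow_add, add_comm]
    have h4 : orderOf g = 4 := by
      rw [hs] at hdvd8 hne1 hne2 hne8 ⊢
      have hs3 : s ≤ 3 := by
        have : (2:ℕ) ^ s ∣ 2 ^ 3 := by norm_num at hdvd8 ⊢; exact hdvd8
        exact (Nat.pow_dvd_pow_iff_le_right (by norm_num)).mp this
      have hs0 : s ≠ 0 := by intro h; rw [h] at hne1; simp at hne1
      have hs1 : s ≠ 1 := by intro h; rw [h] at hne2; simp at hne2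
      have hs3' : s ≠ 3 := by intro h; rw [h] at hne8; norm_num at hne8
      have : s = 2 := by omega
      rw [this]
      norm_num
    refine ⟨g, ?_⟩
    have := Subgroup.card_mul_index (Subgroup.zpowers g)
    rw [Nat.card_zpowers, h4, h8] at this
    omega
  · -- inductive case
    set Z := Subgroup.zpowers z with hZdef
    haveI : Z.Normal := by
      constructor
      intro n hn g
      obtain ⟨k, rfl⟩ := hn
      have hcen : g * z ^ k * g⁻¹ = z ^ k := by
        have hzk : z ^ k ∈ Subgroup.center G := Subgroup.zpow_mem _ hzc k
        rw [Subgroup.mem_center_iff.mp hzk g]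
        group
      rw [hcen]
      exact ⟨k, rfl⟩
    have hcardZ : Nat.card Z = 2 := by rw [hZdef, Nat.card_zpowers, hz2]
    set π : G →* G ⧸ Z := QuotientGroup.mk' Z with hπdef
    have hπs : Function.Surjective π := QuotientGroup.mk'_surjective Z
    have hzker : Z = π.ker := (QuotientGroup.ker_mk' Z).symm
    have hmaptop : Subgroup.map π ⊤ = ⊤ := by
      rw [← MonoidHom.range_eq_map, MonoidHom.range_eq_top_of_surjective _ hπs]
    have hcommQ : commutator (G ⧸ Z) = (commutator G).map π := by
      rw [_root_.commutator_def, _root_.commutator_def, Subgroup.map_commutator, hmaptop]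
    have hidxQ : (commutator (G ⧸ Z)).index = 4 := by
      rw [hcommQ, Subgroup.index_map]
      have hsup : commutator G ⊔ π.ker = commutator G :=
        sup_eq_left.mpr (by rw [← hzker]; exact Subgroup.zpowers_le.mpr hzcomm)
      rw [hsup, MonoidHom.range_eq_top_of_surjective _ hπs, Subgroup.index_top, mul_one, hidx]
    have hidxZ : Z.index = Nat.card (G ⧸ Z) := rfl
    have hcardQ : Nat.card (G ⧸ Z) * 2 = Nat.card G := by
      have := Subgroup.card_mul_index Z
      rw [hcardZ, hidxZ] at this
      omega
    have hQna : ¬ ∀ x y : G ⧸ Z, x * y = y * x := by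
      intro hQab
      apply h8
      have hle : commutator G ≤ Z := by
        rw [_root_.commutator_def]
        refine Subgroup.commutator_le.mpr fun g₁ _ g₂ _ => ?_
        rw [hzker, MonoidHom.mem_ker, map_commutatorElement]
        exact commutatorElement_eq_one_iff_commute.mpr (hQab _ _)
      have hcard2 : Nat.card (commutator G) = 2 :=
        Nat.dvd_antisymm (hcardZ ▸ Subgroup.card_dvd_of_le hle) h2comm
      omega
    have hlt : Nat.card (G ⧸ Z) < N := by
      have h0 : 0 < Nat.card (G ⧸ Z) := Nat.card_pos
      omega
    obtain ⟨abar, habar⟩ := IH (Nat.card (G ⧸ Z)) hlt (G ⧸ Z) rfl (hG.to_quotient Z) hQna hidxQ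
    obtain ⟨a, rfl⟩ := hπs abar
    set A : Subgroup G := Subgroup.comap π (Subgroup.zpowers (π a)) with hAdef
    have hA2 : A.index = 2 := by
      rw [hAdef, Subgroup.index_comap_of_surjective _ hπs]; exact habar
    have haA : a ∈ A := Subgroup.mem_comap.mpr (Subgroup.mem_zpowers _)
    have hzA : z ∈ A := by
      have : π z = 1 := by
        rw [← MonoidHom.mem_ker, ← hzker]
        exact Subgroup.mem_zpowers z
      exact Subgroup.mem_comap.mpr (by rw [this]; exact Subgroup.one_mem _)
    have hdecA : ∀ x, x ∈ A → ∃ k : ℤ, x = a ^ k ∨ x = a ^ k * z := by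
      intro x hx
      rw [hAdef, Subgroup.mem_comap] at hx
      obtain ⟨k, hk⟩ := hx
      have hk' : π (a ^ k) = π x := by simpa [map_zpow] using hk
      have hmemZ : (a ^ k)⁻¹ * x ∈ Z := by
        rw [hzker, MonoidHom.mem_ker, map_mul, map_inv, hk']
        simp
      obtain ⟨j, hj⟩ := hmemZ
      have hj' : z ^ j = (a ^ k)⁻¹ * x := hj
      have hx' : x = a ^ k * z ^ j := by rw [hj']; group
      have hzj : z ^ j = 1 ∨ z ^ j = z := by
        have hmod : z ^ (j % 2) = z ^ j := by
          have := zpow_mod_orderOf z j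
          rw [hz2] at this
          exact_mod_cast this
        rcases Int.emod_two_eq_zero_or_one j with h | h
        · left; rw [← hmod, h, zpow_zero]
        · right; rw [← hmod, h, zpow_one]
      refine ⟨k, ?_⟩
      rcases hzj with h | h
      · left; rw [hx', h, mul_one]
      · right; rw [hx', h]
    by_cases hzin : z ∈ Subgroup.zpowers a
    · refine ⟨a, ?_⟩
      have heq : Subgroup.zpowers a = A := by
        apply le_antisymm (Subgroup.zpowers_le.mpr haA)
        intro x hx
        obtain ⟨k, hk | hk⟩ := hdecA x hx
        · rw [hk]; exact Subgroup.zpow_mem _ (Subgroup.mem_zpowers a) k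
        · rw [hk]; exact Subgroup.mul_mem _ (Subgroup.zpow_mem _ (Subgroup.mem_zpowers a) k) hzin
      rw [heq]; exact hA2
    · exfalso
      have hAne : A ≠ ⊤ := by
        intro h; rw [h, Subgroup.index_top] at hA2; omega
      obtain ⟨b, hb⟩ : ∃ b : G, b ∉ A := by
        by_contra h; push_neg at h
        exact hAne ((Subgroup.eq_top_iff' A).mpr h)
      have hcommA : ∀ x y : G, x ∈ A → y ∈ A → x * y = y * x := by
        intro x y hx hy
        obtain ⟨k, hk⟩ := hdecA x hx
        obtain ⟨l, hl⟩ := hdecA y hy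
        have cz : ∀ w : G, Commute w z := fun w => Subgroup.mem_center_iff.mp hzc w
        have caa : Commute (a ^ k) (a ^ l) := (Commute.refl a).zpow_zpow k l
        have cx : Commute x (a ^ l) := by
          rcases hk with rfl | rfl
          · exact caa
          · exact caa.mul_left (cz (a ^ l)).symm
        have cxy : Commute x y := by
          rcases hl with rfl | rfl
          · exact cx
          · exact cx.mul_right (cz x)
        exact cxy
      obtain ⟨ψ, hψ, hψmem, hψrange⟩ := aux_core A hA2 hcommA hb
      set c := ⁅a, b⁆ with hcdef
      have hca : ψ ⟨a, haA⟩ = c := hψ _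
      have hcz : ψ ⟨z, hzA⟩ = 1 := by
        rw [hψ]
        exact commutatorElement_eq_one_iff_commute.mpr
          (Subgroup.mem_center_iff.mp hzc b).symm
      have hrange : ψ.range = Subgroup.zpowers c := by
        apply le_antisymm
        · rintro _ ⟨x, rfl⟩
          obtain ⟨k, hk | hk⟩ := hdecA (x : G) x.2
          · have hxx : x = (⟨a, haA⟩ : A) ^ k := Subtype.ext (by rw [hk]; rfl)
            rw [hxx, map_zpow, hca]
            exact Subgroup.zpow_mem _ (Subgroup.mem_zpowers c) k
          · have hxx : x = (⟨a, haA⟩ : A) ^ k * ⟨z, hzA⟩ := Subtype.ext (by rw [hk]; rfl)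
            rw [hxx, map_mul, map_zpow, hca, hcz, mul_one]
            exact Subgroup.zpow_mem _ (Subgroup.mem_zpowers c) k
        · exact Subgroup.zpowers_le.mpr ⟨⟨a, haA⟩, hca⟩
      have horderc : orderOf c * 4 = Nat.card G := by
        rw [← Nat.card_zpowers, ← hrange, hψrange]
        exact ecomm
      have hcardA2 : Nat.card A * 2 = Nat.card G := by
        rw [← hA2]; exact Subgroup.card_mul_index _
      -- |A| = 2 * (order of a)
      have hZel : ∀ v : G, v ∈ Subgroup.zpowers z → v = 1 ∨ v = z := by
        intro v hv
        obtain ⟨j, hj⟩ := hv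
        have hj' : z ^ j = v := hj
        have hmod : z ^ (j % 2) = z ^ j := by
          have := zpow_mod_orderOf z j
          rw [hz2] at this
          exact_mod_cast this
        rcases Int.emod_two_eq_zero_or_one j with h | h
        · left; rw [← hj', ← hmod, h, zpow_zero]
        · right; rw [← hj', ← hmod, h, zpow_one]
      have hle1 : Subgroup.zpowers a ≤ A := Subgroup.zpowers_le.mpr haA
      have hle2 : Subgroup.zpowers z ≤ A := Subgroup.zpowers_le.mpr hzA
      have hbij : Function.Bijective
          (fun p : (Subgroup.zpowers a) × (Subgroup.zpowers z) =>
            (⟨(p.1 : G) * (p.2 : G), A.mul_mem (hle1 p.1.2) (hle2 p.2.2)⟩ : A)) := by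
        constructor
        · rintro ⟨⟨x, hx⟩, ⟨v, hv⟩⟩ ⟨⟨y, hy⟩, ⟨w, hw⟩⟩ h
          have h' : x * v = y * w := congrArg Subtype.val h
          have hmem1 : y⁻¹ * x ∈ Subgroup.zpowers a :=
            Subgroup.mul_mem _ (Subgroup.inv_mem _ hy) hx
          have heq2 : y⁻¹ * x = w * v⁻¹ := by
            rw [show x = y * w * v⁻¹ from by rw [← h']; group]
            group
          have hmem2 : y⁻¹ * x ∈ Subgroup.zpowers z := by
            rw [heq2]
            exact Subgroup.mul_mem _ hw (Subgroup.inv_mem _ hv)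
          have h1 : y⁻¹ * x = 1 := by
            rcases hZel _ hmem2 with h1 | h1
            · exact h1
            · exact absurd (h1 ▸ hmem1) hzin
          have hxy : x = y := by
            have := congrArg (fun t => y * t) h1
            simpa [mul_assoc] using this
          have hvw : v = w := by
            subst hxy
            exact mul_left_cancel h'
          subst hxy; subst hvw
          rfl
        · rintro ⟨x, hx⟩
          obtain ⟨k, hk | hk⟩ := hdecA x hx
          · exact ⟨(⟨a ^ k, Subgroup.zpow_mem _ (Subgroup.mem_zpowers a) k⟩,
              ⟨1, Subgroup.one_mem _⟩), Subtype.ext (by simp [hk])⟩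
          · exact ⟨(⟨a ^ k, Subgroup.zpow_mem _ (Subgroup.mem_zpowers a) k⟩,
              ⟨z, Subgroup.mem_zpowers z⟩), Subtype.ext (by simp [hk])⟩
      have hcardA : Nat.card A = orderOf a * 2 := by
        rw [← Nat.card_eq_of_bijective _ hbij, Nat.card_prod, Nat.card_zpowers,
          Nat.card_zpowers, hz2]
      have hordereq : orderOf c = orderOf a := by
        rw [hcardA] at hcardA2
        omega
      -- orderOf a = 2 ^ s with s ≥ 2
      obtain ⟨k0, hk0⟩ := hG a
      obtain ⟨s, _, hs⟩ := (Nat.dvd_prime_pow Nat.prime_two).mp (orderOf_dvd_of_pow_eq_one hk0)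
      have hcardGa : orderOf a * 8 = Nat.card G * 2 := by
        rw [hcardA] at hcardA2; omega
      have hs2 : 2 ≤ s := by
        by_contra hlt2
        interval_cases s <;> rw [hs] at hcardGa <;> omega
      set M := 2 ^ (s - 1) with hMdef
      have hMev : 2 ∣ M := dvd_pow_self 2 (by omega : s - 1 ≠ 0)
      have h2M : M * 2 = orderOf a := by
        rw [hs, hMdef, ← pow_succ]
        congr 1
        omega
      have hMpos : 0 < M := by positivity
      set u := a ^ M with hudef
      have hu1 : u ≠ 1 := by
        intro h
        have hdvd := orderOf_dvd_of_pow_eq_one h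
        have := Nat.le_of_dvd hMpos hdvd
        omega
      have hz2' : z ^ 2 = 1 := by rw [← hz2]; exact pow_orderOf_eq_one z
      have hzM : z ^ M = 1 := by
        obtain ⟨t, ht⟩ := hMev
        rw [ht, pow_mul, hz2', one_pow]
      have hcA : c ∈ A := by rw [← hca]; exact hψmem _
      obtain ⟨k, hk⟩ := hdecA c hcA
      have hcM : c ^ M = (a ^ k) ^ M := by
        rcases hk with hk | hk
        · rw [hk]
        · have hcom : Commute (a ^ k) z := Subgroup.mem_center_iff.mp hzc (a ^ k)
          rw [hk, hcom.mul_pow, hzM, mul_one]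
      have hkey : (a ^ k) ^ M = a ^ (k * (M : ℤ)) := by
        rw [← zpow_natCast (a ^ k) M, ← zpow_mul]
      have haOM : a ^ ((M : ℤ) * 2) = 1 := by
        have : ((M : ℤ) * 2) = ((M * 2 : ℕ) : ℤ) := by push_cast; ring
        rw [this, zpow_natCast, h2M, pow_orderOf_eq_one]
      rcases Int.even_or_odd k with ⟨j, hj⟩ | ⟨j, hj⟩
      · -- even exponent : c ^ M = 1, contradicting orderOf c = 2 ^ s
        have hc1 : c ^ M = 1 := by
          rw [hcM, hkey, hj]
          have : (j + j) * (M : ℤ) = ((M : ℤ) * 2) * j := by ring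
          rw [this, zpow_mul, haOM, one_zpow]
        have hdvd := orderOf_dvd_of_pow_eq_one hc1
        rw [hordereq] at hdvd
        have := Nat.le_of_dvd hMpos hdvd
        omega
      · -- odd exponent : c ^ M = u, contradiction via ⁅u, b⁆ = u
        have hcu : c ^ M = u := by
          rw [hcM, hkey, hj]
          have : (2 * j + 1) * (M : ℤ) = ((M : ℤ) * 2) * j + (M : ℤ) := by ring
          rw [this, zpow_add, zpow_mul, haOM, one_zpow, one_mul, zpow_natCast]
        have hub : ⁅u, b⁆ = u := by
          have h1 := hψ (⟨a, haA⟩ ^ M)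
          have h2 : ψ (⟨a, haA⟩ ^ M) = c ^ M := by rw [map_pow, hca]
          have h3 : ((⟨a, haA⟩ ^ M : A) : G) = u := rfl
          rw [h2, h3, hcu] at h1
          exact h1.symm
        have hfin : u⁻¹ = 1 := by
          have h3 : u * b * u⁻¹ * b⁻¹ = u := by
            rw [← commutatorElement_def]; exact hub
          have h4 : u * (b * u⁻¹ * b⁻¹) = u * 1 := by
            rw [mul_one]
            calc u * (b * u⁻¹ * b⁻¹) = u * b * u⁻¹ * b⁻¹ := by group
              _ = u := h3
          have h5 : b * u⁻¹ * b⁻¹ = 1 := mul_left_cancel h4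
          have h6 : b * u⁻¹ * b⁻¹ = b * u⁻¹ * b⁻¹ := rfl
          calc u⁻¹ = b⁻¹ * (b * u⁻¹ * b⁻¹) * b := by group
            _ = b⁻¹ * 1 * b := by rw [h5]
            _ = 1 := by group
        exact hu1 (by simpa using inv_eq_one.mp hfin)


/-- If `G` is a nonabelian finite `2`-group with `|G : G'| = 4`, then the number
of conjugacy classes `k(G)` is not a power of `2`. -/
theorem card_conjClasses_not_two_pow_of_index_four
    (G : Type) [Group G] [Finite G] (hG : IsPGroup 2 G)
    (hna : ¬ ∀ x y : G, x * y = y * x)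
    (hidx : (commutator G).index = 4) :
    ¬ ∃ m : ℕ, Nat.card (ConjClasses G) = 2 ^ m := by
  rintro ⟨m, hm⟩
  haveI : Fact (Nat.Prime 2) := ⟨Nat.prime_two⟩
  obtain ⟨a, ha2⟩ := aux_cyclic_index_two (Nat.card G) G rfl hG hna hidx
  have hcommA : ∀ x y : G, x ∈ Subgroup.zpowers a → y ∈ Subgroup.zpowers a → x * y = y * x := by
    intro x y hx hy
    obtain ⟨i, hi⟩ := hx
    obtain ⟨j, hj⟩ := hy
    have hi' : a ^ i = x := hi
    have hj' : a ^ j = y := hj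
    rw [← hi', ← hj', ← zpow_add, ← zpow_add, add_comm]
  have hcount := aux_count (Subgroup.zpowers a) ha2 hcommA hna hidx
  obtain ⟨j, hj⟩ := (hG.to_subgroup (Subgroup.zpowers a)).exists_card_eq
  -- the group has cardinality at least 8
  obtain ⟨x, y, hxy⟩ : ∃ x y : G, x * y ≠ y * x := by
    by_contra h; push_neg at h; exact hna h
  have hcne : ⁅x, y⁆ ≠ 1 := fun h => hxy (commutatorElement_eq_one_iff_commute.mp h)
  have hcmem : ⁅x, y⁆ ∈ commutator G :=
    commutator_mem_commutator (Subgroup.mem_top _) (Subgroup.mem_top _)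
  haveI : Nontrivial (commutator G) :=
    ⟨⟨⟨⁅x, y⁆, hcmem⟩, 1, fun h => hcne (by simpa using congrArg Subtype.val h)⟩⟩
  have hcomm2 : 2 ≤ Nat.card (commutator G) := Finite.one_lt_card
  have ecomm : Nat.card (commutator G) * 4 = Nat.card G := by
    rw [← hidx]; exact Subgroup.card_mul_index _
  have eA : Nat.card (Subgroup.zpowers a) * 2 = Nat.card G := by
    rw [← ha2]; exact Subgroup.card_mul_index _
  have hq4 : 4 ≤ Nat.card (Subgroup.zpowers a) := by omega
  -- now `2 * 2 ^ m = 2 ^ j + 6` with `2 ^ j ≥ 4`, which is impossible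
  rw [hm, hj] at hcount
  rw [hj] at hq4
  have hj2 : 2 ≤ j := by
    by_contra hlt
    interval_cases j <;> omega
  have h4dvd : (4 : ℕ) ∣ 2 ^ j := by
    have : (2 : ℕ) ^ 2 ∣ 2 ^ j := pow_dvd_pow 2 hj2
    simpa using this
  obtain ⟨t, ht⟩ := h4dvd
  rcases m with _ | m'
  · rw [pow_zero] at hcount; omega
  · have h4m : 2 * 2 ^ (m' + 1) = 4 * 2 ^ m' := by ring
    rw [h4m, ht] at hcount
    omega
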